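/- Let C be a right triangulated category with shift Σ, and M a rigid subcategory satisfying: (RC1) Σ restricted to M is fully faithful; (RC2) for any right triangle M0 → M1 →g X → ΣM0 with M0, M1 ∈ M, g is a right M-approximation of X. Then the functor X ↦ Hom_C(−, X)|_M induces an equivalence of categories (M ∗ ΣM)/ΣM ≃ mod M. -/

import Mathlib

open CategoryTheory CategoryTheory.Limits Opposite ZeroObject

universe v u

/-- A right triangulated category `(C, Σ, ▷)`: an additive category with an additive
shift endofunctor `Σ` and a class of right triangles `U ⟶ V ⟶ W ⟶ ΣU` satisfying
axioms (RTR0)–(RTR4). -/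
structure RightTriangulated (C : Type u) [Category.{v} C] [Preadditive C]
    [HasZeroObject C] where
  /-- the shift functor `Σ` -/
  shift : C ⥤ C
  shift_additive : shift.Additive
  /-- the class of right triangles -/
  IsTri : ∀ ⦃U V W : C⦄, (U ⟶ V) → (V ⟶ W) → (W ⟶ shift.obj U) → Prop
  /-- (RTR0): right triangles are closed under isomorphism of sequences -/
  rtr0 : ∀ ⦃U V W U' V' W' : C⦄ (u : U ⟶ V) (v : V ⟶ W) (w : W ⟶ shift.obj U)
      (u' : U' ⟶ V') (v' : V' ⟶ W') (w' : W' ⟶ shift.obj U')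
      (f : U ≅ U') (g : V ≅ V') (h : W ≅ W'),
      IsTri u v w → u ≫ g.hom = f.hom ≫ u' → v ≫ h.hom = g.hom ≫ v' →
      w ≫ shift.map f.hom = h.hom ≫ w' → IsTri u' v' w'
  /-- (RTR1a): `0 ⟶ U = U ⟶ Σ0` is a right triangle -/
  rtr1_id : ∀ U : C, IsTri (0 : (0 : C) ⟶ U) (𝟙 U) 0
  /-- (RTR1b): every morphism embeds in a right triangle -/
  rtr1_ex : ∀ ⦃U V : C⦄ (u : U ⟶ V), ∃ (W : C) (v : V ⟶ W) (w : W ⟶ shift.obj U),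
      IsTri u v w
  /-- (RTR2): rotation -/
  rtr2 : ∀ ⦃U V W : C⦄ (u : U ⟶ V) (v : V ⟶ W) (w : W ⟶ shift.obj U),
      IsTri u v w → IsTri v w (-shift.map u)
  /-- (RTR3): morphisms of right triangles -/
  rtr3 : ∀ ⦃U V W U' V' W' : C⦄ (u : U ⟶ V) (v : V ⟶ W) (w : W ⟶ shift.obj U)
      (u' : U' ⟶ V') (v' : V' ⟶ W') (w' : W' ⟶ shift.obj U')
      (f : U ⟶ U') (g : V ⟶ V'), IsTri u v w → IsTri u' v' w' →
      u ≫ g = f ≫ u' →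
      ∃ h : W ⟶ W', v ≫ h = g ≫ v' ∧ w ≫ shift.map f = h ≫ w'
  /-- (RTR4): the octahedron axiom -/
  rtr4 : ∀ ⦃U V W U' W' : C⦄ (u : U ⟶ V) (v : V ⟶ W) (w : W ⟶ shift.obj U)
      (u' : U' ⟶ U) (v' : U ⟶ W') (w' : W' ⟶ shift.obj U'),
      IsTri u v w → IsTri u' v' w' →
      ∃ (V' : C) (p : V ⟶ V') (q : V' ⟶ shift.obj U') (f : W' ⟶ V') (g : V' ⟶ W),
        IsTri (u' ≫ u) p q ∧ IsTri f g (w ≫ shift.map v') ∧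
        v' ≫ f = u ≫ p ∧ p ≫ g = v ∧ f ≫ q = w'
universe v' u' v'' u''

/-- `f` factors through an object belonging to `B`. -/
def FactorsThru {A : Type u''} [Category.{v''} A] (B : Set A) {X Y : A} (f : X ⟶ Y) : Prop :=
  ∃ (Z : A) (_ : Z ∈ B) (g : X ⟶ Z) (h : Z ⟶ Y), g ≫ h = f

variable {C : Type u} [Category.{v} C] [Preadditive C] [HasZeroObject C]

/-- The full subcategory on a set of objects. -/
abbrev Subcat (𝓜 : Set C) := ObjectProperty.FullSubcategory (fun X : C => X ∈ 𝓜)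

/-- The functor `X ↦ Hom_C(−, X)|_𝓜`, the restricted preadditive Yoneda embedding. -/
def resYoneda (𝓜 : Set C) : C ⥤ ((Subcat 𝓜)ᵒᵖ ⥤ AddCommGrpCat.{v}) :=
  preadditiveYoneda ⋙
    (Functor.whiskeringLeft _ _ _).obj (ObjectProperty.ι (fun X : C => X ∈ 𝓜)).op

/-- A contravariant additive functor `F` (an `M`-module) is finitely presented if it is
the cokernel of a morphism between representable functors, i.e. there are `A B : M`,
`h : A ⟶ B` and `π : Hom(−,B) ⟶ F` such that
`Hom(−,A) ⟶ Hom(−,B) ⟶ F ⟶ 0` is exact. -/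
def FinPres {M : Type u'} [Category.{v'} M] [Preadditive M]
    (F : Mᵒᵖ ⥤ AddCommGrpCat.{v'}) : Prop :=
  ∃ (A B : M) (h : A ⟶ B) (π : preadditiveYoneda.obj B ⟶ F),
    (∀ m : M, Function.Surjective (π.app (op m))) ∧
    (∀ (m : M) (x : (preadditiveYoneda.obj B).obj (op m)),
      π.app (op m) x = 0 ↔ ∃ y, (preadditiveYoneda.map h).app (op m) y = x)

/-- `mod M`: the category of finitely presented contravariant additive functors
`M → Ab`. -/
abbrev ModCat (M : Type u') [Category.{v'} M] [Preadditive M] :=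
  ObjectProperty.FullSubcategory (fun F : Mᵒᵖ ⥤ AddCommGrpCat.{v'} => F.Additive ∧ FinPres F)

variable (T : RightTriangulated C) (𝓜 : Set C)

/-- The subcategory `𝓜 ∗ Σ𝓜` of objects `X` admitting a right triangle
`M0 ⟶ M1 ⟶ X ⟶ ΣM0` with `M0, M1 ∈ 𝓜`. -/
def star : Set C :=
  {X | ∃ M0 M1 : C, M0 ∈ 𝓜 ∧ M1 ∈ 𝓜 ∧
    ∃ (f : M0 ⟶ M1) (g : M1 ⟶ X) (h : X ⟶ T.shift.obj M0), T.IsTri f g h}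

/-- The hom relation on `𝓜 ∗ Σ𝓜` identifying morphisms whose difference factors
through an object of `Σ𝓜`; its quotient is `(𝓜 ∗ Σ𝓜)/Σ𝓜`. -/
def starRel : HomRel (Subcat (star T 𝓜)) :=
  fun {X Y} (f g : X ⟶ Y) =>
    FactorsThru (T.shift.obj '' 𝓜) (X := X.obj) (Y := Y.obj) (f - g).hom

section Aux
variable {T 𝓜}

lemma tri_comp_zero {U V W : C} {u : U ⟶ V} {v : V ⟶ W} {w : W ⟶ T.shift.obj U}
    (hT : T.IsTri u v w) : u ≫ v = 0 := by
  obtain ⟨h, h1, -⟩ :=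
    T.rtr3 (𝟙 U) (0 : U ⟶ T.shift.obj (0 : C)) _ u v w (𝟙 U) u
      (T.rtr2 _ _ _ (T.rtr1_id U)) hT (by simp)
  simpa using h1.symm

lemma weak_cokernel {U V W Y : C} {u : U ⟶ V} {v : V ⟶ W} {w : W ⟶ T.shift.obj U}
    (hT : T.IsTri u v w) (t : V ⟶ Y) (h0 : u ≫ t = 0) : ∃ s : W ⟶ Y, v ≫ s = t := by
  obtain ⟨s, h1, -⟩ := T.rtr3 u v w (0 : (0 : C) ⟶ Y) (𝟙 Y) 0 0 t hT (T.rtr1_id Y)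
    (by simp [h0])
  exact ⟨s, by simpa using h1⟩

lemma exact_mid
    (RC1 : ∀ ⦃m m' : C⦄, m ∈ 𝓜 → m' ∈ 𝓜 →
      Function.Bijective (fun φ : m ⟶ m' => T.shift.map φ))
    {M0 M1 X : C} (hM0 : M0 ∈ 𝓜) (hM1 : M1 ∈ 𝓜)
    {f : M0 ⟶ M1} {g : M1 ⟶ X} {k : X ⟶ T.shift.obj M0} (hT : T.IsTri f g k)
    {m : C} (hm : m ∈ 𝓜) (x : m ⟶ M1) (hx : x ≫ g = 0) : ∃ y : m ⟶ M0, y ≫ f = x := by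
  obtain ⟨N, p, q, hT2⟩ := T.rtr1_ex x
  obtain ⟨r, hr⟩ := weak_cokernel hT2 g hx
  obtain ⟨t, ht1, ht2⟩ := T.rtr3 p q (-T.shift.map x) g k (-T.shift.map f) (𝟙 M1) r
      (T.rtr2 _ _ _ hT2) (T.rtr2 _ _ _ hT) (by rw [hr, Category.id_comp])
  obtain ⟨y, hy⟩ := (RC1 hm hM0).2 t
  refine ⟨y, (RC1 hm hM1).1 ?_⟩
  dsimp only
  rw [T.shift.map_comp, show T.shift.map y = t from hy]
  simpa using ht2.symm

end Aux
section Aux2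
omit [HasZeroObject C]

/-- view an element of the restricted Yoneda functor as a morphism in `C` -/
abbrev el {X : C} {m : (Subcat 𝓜)ᵒᵖ} (s : ((resYoneda 𝓜).obj X).obj m) :
    m.unop.obj ⟶ X := s

/-- view an element of the Yoneda functor as a morphism in `C` -/
abbrev elP {B : Subcat 𝓜} {m : (Subcat 𝓜)ᵒᵖ} (s : (preadditiveYoneda.obj B).obj m) :
    m.unop.obj ⟶ B.obj := (s : m.unop ⟶ B).hom

/-- view a morphism in `C` as an element of the restricted Yoneda functor -/
abbrev mkEl {X : C} {m : (Subcat 𝓜)ᵒᵖ} (s : m.unop.obj ⟶ X) :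
    ((resYoneda 𝓜).obj X).obj m := s

/-- view a morphism in `C` as an element of the Yoneda functor -/
abbrev mkElP {B : Subcat 𝓜} {m : (Subcat 𝓜)ᵒᵖ} (s : m.unop.obj ⟶ B.obj) :
    (preadditiveYoneda.obj B).obj m := (ObjectProperty.homMk s : m.unop ⟶ B)

/-- composition with `g : B.obj ⟶ X` as a natural transformation. -/
def compNat {X : C} (B : Subcat 𝓜) (g : B.obj ⟶ X) :
    preadditiveYoneda.obj B ⟶ (resYoneda 𝓜).obj X where
  app m := AddCommGrpCat.ofHom
    (AddMonoidHom.mk' (fun s => mkEl 𝓜 (elP 𝓜 s ≫ g))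
      (fun a b => Preadditive.add_comp _ _ _ (elP 𝓜 a) (elP 𝓜 b) g))
  naturality m m' φ := AddCommGrpCat.ext fun s => by
    show mkEl 𝓜 ((elP 𝓜 ((preadditiveYoneda.obj B).map φ s)) ≫ g)
        = ((resYoneda 𝓜).obj X).map φ (mkEl 𝓜 (elP 𝓜 s ≫ g))
    show ((show m'.unop.obj ⟶ m.unop.obj from φ.unop.hom) ≫ elP 𝓜 s) ≫ g
        = (show m'.unop.obj ⟶ m.unop.obj from φ.unop.hom) ≫ (elP 𝓜 s ≫ g)
    exact Category.assoc _ _ _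

section test
variable {X : C} (B : Subcat 𝓜) (g : B.obj ⟶ X) (m : (Subcat 𝓜)ᵒᵖ)

example (s : (preadditiveYoneda.obj B).obj m) :
    el 𝓜 ((compNat 𝓜 B g).app m s) = elP 𝓜 s ≫ g := rfl

example (t : X ⟶ X) (s : ((resYoneda 𝓜).obj X).obj m) :
    el 𝓜 (((resYoneda 𝓜).map t).app m s) = el 𝓜 s ≫ t := rfl

example (m' : (Subcat 𝓜)ᵒᵖ) (φ : m ⟶ m') (s : ((resYoneda 𝓜).obj X).obj m) :
    el 𝓜 (((resYoneda 𝓜).obj X).map φ s) =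
      (show m'.unop.obj ⟶ m.unop.obj from φ.unop.hom) ≫ el 𝓜 s := rfl

example {A : Subcat 𝓜} (h : A ⟶ B) (s : (preadditiveYoneda.obj A).obj m) :
    elP 𝓜 ((preadditiveYoneda.map h).app m s) =
      elP 𝓜 s ≫ (show A.obj ⟶ B.obj from h.hom) := rfl
end test

end Aux2
section Aux3

omit [HasZeroObject C] in
lemma resYoneda_obj_additive (X : C) : ((resYoneda 𝓜).obj X).Additive :=
  inferInstanceAs (((ObjectProperty.ι (fun Y : C => Y ∈ 𝓜)).op ⋙
    preadditiveYoneda.obj X).Additive)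

variable {T 𝓜}

lemma finPres_of_star
    (RC1 : ∀ ⦃m m' : C⦄, m ∈ 𝓜 → m' ∈ 𝓜 →
      Function.Bijective (fun φ : m ⟶ m' => T.shift.map φ))
    (RC2 : ∀ ⦃M0 M1 X : C⦄, M0 ∈ 𝓜 → M1 ∈ 𝓜 →
      ∀ (f : M0 ⟶ M1) (g : M1 ⟶ X) (h : X ⟶ T.shift.obj M0), T.IsTri f g h →
      ∀ ⦃m : C⦄, m ∈ 𝓜 → ∀ t : m ⟶ X, ∃ s : m ⟶ M1, s ≫ g = t)
    {X : C} (hX : X ∈ star T 𝓜) : FinPres ((resYoneda 𝓜).obj X) := by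
  obtain ⟨M0, M1, hM0, hM1, f, g, k, hT⟩ := hX
  refine ⟨⟨M0, hM0⟩, ⟨M1, hM1⟩, ObjectProperty.homMk f, compNat 𝓜 ⟨M1, hM1⟩ g, fun m => ?_, fun m x => ?_⟩
  · intro t
    obtain ⟨s, hs⟩ := RC2 hM0 hM1 f g k hT m.2 (el 𝓜 t)
    exact ⟨mkElP 𝓜 s, hs⟩
  · constructor
    · intro hx
      obtain ⟨y, hy⟩ := exact_mid RC1 hM0 hM1 hT m.2 (elP 𝓜 x) hx
      exact ⟨mkElP 𝓜 y, (show (ObjectProperty.homMk y : m ⟶ ⟨M0, hM0⟩) ≫ ObjectProperty.homMk f = (x : m ⟶ ⟨M1, hM1⟩) from InducedCategory.hom_ext hy)⟩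
    · rintro ⟨y, rfl⟩
      show (elP 𝓜 y ≫ f) ≫ g = 0
      rw [Category.assoc, tri_comp_zero hT, Limits.comp_zero]

end Aux3
section Aux4
variable {T 𝓜}

lemma full_aux
    (RC2 : ∀ ⦃M0 M1 X : C⦄, M0 ∈ 𝓜 → M1 ∈ 𝓜 →
      ∀ (f : M0 ⟶ M1) (g : M1 ⟶ X) (h : X ⟶ T.shift.obj M0), T.IsTri f g h →
      ∀ ⦃m : C⦄, m ∈ 𝓜 → ∀ t : m ⟶ X, ∃ s : m ⟶ M1, s ≫ g = t)
    {X Y : C} (hX : X ∈ star T 𝓜)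
    (η : (resYoneda 𝓜).obj X ⟶ (resYoneda 𝓜).obj Y) :
    ∃ t : X ⟶ Y, (resYoneda 𝓜).map t = η := by
  obtain ⟨M0, M1, hM0, hM1, f, g, k, hT⟩ := hX
  set b : M1 ⟶ Y := el 𝓜 (η.app (op ⟨M1, hM1⟩) (mkEl (m := op ⟨M1, hM1⟩) 𝓜 g)) with hb
  have key : η.app (op ⟨M0, hM0⟩) (mkEl (m := op ⟨M0, hM0⟩) 𝓜 (f ≫ g))
      = mkEl (m := op ⟨M0, hM0⟩) 𝓜 (f ≫ b) :=
    ConcreteCategory.congr_hom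
      (η.naturality (Quiver.Hom.op (show (⟨M0, hM0⟩ : Subcat 𝓜) ⟶ ⟨M1, hM1⟩ from ObjectProperty.homMk f)))
      (mkEl (m := op ⟨M1, hM1⟩) 𝓜 g)
  have hfg : mkEl (m := op ⟨M0, hM0⟩) 𝓜 (f ≫ g) = mkEl (m := op ⟨M0, hM0⟩) (X := X) 𝓜 0 := by
    rw [tri_comp_zero hT]
  have hfb : f ≫ b = 0 := by
    have h2 : mkEl (m := op ⟨M0, hM0⟩) 𝓜 (f ≫ b) = mkEl (m := op ⟨M0, hM0⟩) (X := Y) 𝓜 0 := by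
      rw [← key, hfg]; exact map_zero _
    exact h2
  obtain ⟨t, ht⟩ := weak_cokernel hT b hfb
  refine ⟨t, ?_⟩
  apply NatTrans.ext
  funext m
  apply AddCommGrpCat.ext
  intro s
  obtain ⟨s', hs'⟩ := RC2 hM0 hM1 f g k hT m.unop.2 (el 𝓜 s)
  have h4 : el 𝓜 s = s' ≫ g := hs'.symm
  show mkEl 𝓜 (el 𝓜 s ≫ t) = η.app m s
  have h5 : η.app m s = η.app m (((resYoneda 𝓜).obj X).map
      (Quiver.Hom.op (show m.unop ⟶ (⟨M1, hM1⟩ : Subcat 𝓜) from ObjectProperty.homMk s')) (mkEl (m := op ⟨M1, hM1⟩) 𝓜 g)) := by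
    congr 1
  have h6 := ConcreteCategory.congr_hom
    (η.naturality (Quiver.Hom.op (show m.unop ⟶ (⟨M1, hM1⟩ : Subcat 𝓜) from ObjectProperty.homMk s'))) (mkEl (m := op ⟨M1, hM1⟩) 𝓜 g)
  have h7 : η.app m (((resYoneda 𝓜).obj X).map
      (Quiver.Hom.op (show m.unop ⟶ (⟨M1, hM1⟩ : Subcat 𝓜) from ObjectProperty.homMk s')) (mkEl (m := op ⟨M1, hM1⟩) 𝓜 g))
      = mkEl 𝓜 (s' ≫ b) := h6
  rw [h5, h7]
  show mkEl 𝓜 (el 𝓜 s ≫ t) = mkEl 𝓜 (s' ≫ b)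
  rw [h4, ← ht, Category.assoc]

lemma faithful_aux {X Y : C} (hX : X ∈ star T 𝓜) (d : X ⟶ Y)
    (hd : ∀ (m : Subcat 𝓜) (s : m.obj ⟶ X), s ≫ d = 0) :
    FactorsThru (T.shift.obj '' 𝓜) d := by
  obtain ⟨M0, M1, hM0, hM1, f, g, k, hT⟩ := hX
  obtain ⟨e, he⟩ := weak_cokernel (T.rtr2 _ _ _ hT) d (hd ⟨M1, hM1⟩ g)
  exact ⟨T.shift.obj M0, ⟨M0, hM0, rfl⟩, k, e, he⟩

end Aux4
section Aux5
variable {T 𝓜}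

lemma essSurj_aux
    (RC1 : ∀ ⦃m m' : C⦄, m ∈ 𝓜 → m' ∈ 𝓜 →
      Function.Bijective (fun φ : m ⟶ m' => T.shift.map φ))
    (RC2 : ∀ ⦃M0 M1 X : C⦄, M0 ∈ 𝓜 → M1 ∈ 𝓜 →
      ∀ (f : M0 ⟶ M1) (g : M1 ⟶ X) (h : X ⟶ T.shift.obj M0), T.IsTri f g h →
      ∀ ⦃m : C⦄, m ∈ 𝓜 → ∀ t : m ⟶ X, ∃ s : m ⟶ M1, s ≫ g = t)
    {F : (Subcat 𝓜)ᵒᵖ ⥤ AddCommGrpCat.{v}} (hF : FinPres F) :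
    ∃ (X : C) (_ : X ∈ star T 𝓜), Nonempty (F ≅ (resYoneda 𝓜).obj X) := by
  obtain ⟨A, B, h, π, hsurj, hker⟩ := hF
  obtain ⟨X, g, k, hT⟩ := T.rtr1_ex (show A.obj ⟶ B.obj from h.hom)
  have hX : X ∈ star T 𝓜 := ⟨A.obj, B.obj, A.2, B.2, h.hom, g, k, hT⟩
  have hhg : (show A.obj ⟶ B.obj from h.hom) ≫ g = 0 := tri_comp_zero hT
  -- sections with equal image under π compose equally with g
  have key : ∀ (m : Subcat 𝓜) (s s' : m ⟶ B), π.app (op m) s = π.app (op m) s' →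
      (show m.obj ⟶ B.obj from s.hom) ≫ g = (show m.obj ⟶ B.obj from s'.hom) ≫ g := by
    intro m s s' hss
    have h0 : π.app (op m) (s - s') = 0 :=
      (map_sub (ConcreteCategory.hom (π.app (op m))) s s').trans (sub_eq_zero.2 hss)
    obtain ⟨y, hy⟩ := (hker m (s - s')).1 h0
    have hy' : (show m.obj ⟶ A.obj from (y : m ⟶ A).hom) ≫ (show A.obj ⟶ B.obj from h.hom)
        = (show m.obj ⟶ B.obj from s.hom) - (show m.obj ⟶ B.obj from s'.hom) := congrArg (fun z : m ⟶ B => z.hom) hy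
    have h2 : ((show m.obj ⟶ B.obj from s.hom) - (show m.obj ⟶ B.obj from s'.hom)) ≫ g = 0 := by
      rw [← hy', Category.assoc, hhg, Limits.comp_zero]
    rw [Preadditive.sub_comp] at h2
    exact sub_eq_zero.1 h2
  -- the chosen section
  let sec : ∀ (m : (Subcat 𝓜)ᵒᵖ) (ξ : F.obj m), m.unop ⟶ B :=
    fun m ξ => Classical.choose (hsurj m.unop ξ)
  have hsec : ∀ (m : (Subcat 𝓜)ᵒᵖ) (ξ : F.obj m), π.app (op m.unop) (sec m ξ) = ξ :=
    fun m ξ => Classical.choose_spec (hsurj m.unop ξ)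
  have keysec : ∀ (m : (Subcat 𝓜)ᵒᵖ) (ξ : F.obj m) (s : m.unop ⟶ B),
      π.app (op m.unop) s = ξ →
      (show m.unop.obj ⟶ B.obj from (sec m ξ).hom) ≫ g = (show m.unop.obj ⟶ B.obj from s.hom) ≫ g := by
    intro m ξ s hs
    exact key m.unop (sec m ξ) s (by rw [hsec, hs])
  -- pointwise naturality of π
  have πnat : ∀ {m m' : (Subcat 𝓜)ᵒᵖ} (φ : m ⟶ m') (s : m.unop ⟶ B),
      π.app m' ((preadditiveYoneda.obj B).map φ (mkElP 𝓜 s.hom)) = F.map φ (π.app (op m.unop) s) :=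
    fun φ s => ConcreteCategory.congr_hom (π.naturality φ) (mkElP 𝓜 s.hom)
  -- the natural transformation ρ : F ⟶ resYoneda X
  let ρ : F ⟶ (resYoneda 𝓜).obj X :=
    { app := fun m => AddCommGrpCat.ofHom
        (AddMonoidHom.mk' (fun ξ => mkEl 𝓜 ((show m.unop.obj ⟶ B.obj from (sec m ξ).hom) ≫ g))
          (by
            intro ξ ξ'
            dsimp only
            have e1 : π.app (op m.unop) (sec m ξ + sec m ξ') = ξ + ξ' := by
              exact (map_add (ConcreteCategory.hom (π.app (op m.unop))) (sec m ξ) (sec m ξ')).trans (congrArg₂ (· + ·) (hsec m ξ) (hsec m ξ'))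
            have := keysec m (ξ + ξ') (sec m ξ + sec m ξ') e1
            rw [this]
            have : (show m.unop.obj ⟶ B.obj from (sec m ξ + sec m ξ').hom)
                = (show m.unop.obj ⟶ B.obj from (sec m ξ).hom)
                  + (show m.unop.obj ⟶ B.obj from (sec m ξ').hom) := rfl
            rw [this, Preadditive.add_comp]; rfl))
      naturality := by
        intro m m' φ
        apply AddCommGrpCat.ext
        intro ξ
        have e1 : π.app (op m'.unop) ((φ.unop : m'.unop ⟶ m.unop) ≫ sec m ξ) = F.map φ ξ := by
          have := πnat φ (sec m ξ)
          rw [hsec] at this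
          exact this
        have e2 := keysec m' (F.map φ ξ) ((φ.unop : m'.unop ⟶ m.unop) ≫ sec m ξ) e1
        show mkEl 𝓜 ((show m'.unop.obj ⟶ B.obj from (sec m' (F.map φ ξ)).hom) ≫ g)
            = ((resYoneda 𝓜).obj X).map φ
                (mkEl 𝓜 ((show m.unop.obj ⟶ B.obj from (sec m ξ).hom) ≫ g))
        have e3 : ((resYoneda 𝓜).obj X).map φ
              (mkEl 𝓜 ((show m.unop.obj ⟶ B.obj from (sec m ξ).hom) ≫ g))
            = mkEl 𝓜 ((show m'.unop.obj ⟶ m.unop.obj from φ.unop.hom)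
                ≫ ((show m.unop.obj ⟶ B.obj from (sec m ξ).hom) ≫ g)) := rfl
        rw [e3]
        have e4 : (show m'.unop.obj ⟶ B.obj from ((φ.unop : m'.unop ⟶ m.unop) ≫ sec m ξ).hom) ≫ g
            = (show m'.unop.obj ⟶ m.unop.obj from φ.unop.hom)
                ≫ ((show m.unop.obj ⟶ B.obj from (sec m ξ).hom) ≫ g) := by
          rw [← Category.assoc]; rfl
        rw [← e4]
        exact congrArg (mkEl 𝓜) e2 }
  have bij : ∀ m : (Subcat 𝓜)ᵒᵖ, Function.Bijective (ρ.app m) := by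
    intro m
    constructor
    · intro ξ ξ' hξ
      have e1 : (show m.unop.obj ⟶ B.obj from (sec m ξ - sec m ξ').hom) ≫ g = 0 := by
        have : (show m.unop.obj ⟶ B.obj from (sec m ξ - sec m ξ').hom)
            = (show m.unop.obj ⟶ B.obj from (sec m ξ).hom)
              - (show m.unop.obj ⟶ B.obj from (sec m ξ').hom) := rfl
        rw [this, Preadditive.sub_comp]
        have hξ' : (show m.unop.obj ⟶ B.obj from (sec m ξ).hom) ≫ g
            = (show m.unop.obj ⟶ B.obj from (sec m ξ').hom) ≫ g := congrArg (el 𝓜) hξ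
        rw [hξ', sub_self]
      obtain ⟨y, hy⟩ := exact_mid RC1 A.2 B.2 hT m.unop.2
        (show m.unop.obj ⟶ B.obj from (sec m ξ - sec m ξ').hom) e1
      have h0 : π.app (op m.unop) (sec m ξ - sec m ξ') = 0 := by
        apply (hker m.unop (sec m ξ - sec m ξ')).2
        exact ⟨mkElP 𝓜 (show m.unop.obj ⟶ A.obj from y), (show (ObjectProperty.homMk y : m.unop ⟶ A) ≫ h = sec m ξ - sec m ξ' from InducedCategory.hom_ext hy)⟩
      have := hsec m ξ
      exact (hsec m ξ).symm.trans ((sub_eq_zero.1 ((map_sub (ConcreteCategory.hom (π.app (op m.unop))) (sec m ξ) (sec m ξ')).symm.trans h0)).trans (hsec m ξ'))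
    · intro t
      obtain ⟨s, hs⟩ := RC2 A.2 B.2 (show A.obj ⟶ B.obj from h.hom) g k hT m.unop.2 (el 𝓜 t)
      refine ⟨π.app (op m.unop) (mkElP 𝓜 s), ?_⟩
      have := keysec m (π.app (op m.unop) (mkElP 𝓜 s)) (mkElP 𝓜 s) rfl
      show mkEl 𝓜 ((show m.unop.obj ⟶ B.obj from
        (sec m (π.app (op m.unop) (mkElP 𝓜 s))).hom) ≫ g) = t
      rw [this]
      exact hs
  have : ∀ m, IsIso (ρ.app m) := fun m => (ConcreteCategory.isIso_iff_bijective _).2 (bij m)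
  have : IsIso ρ := NatIso.isIso_of_isIso_app ρ
  exact ⟨X, hX, ⟨asIso ρ⟩⟩

end Aux5
/-- Let `C` be a right triangulated category and `𝓜` a rigid
subcategory satisfying (RC1) and (RC2).  Then `X ↦ Hom_C(−,X)|_𝓜` induces an
equivalence `(𝓜 ∗ Σ𝓜)/Σ𝓜 ≌ mod 𝓜`. -/
theorem stmt7
    (rigid : ∀ ⦃m m' : C⦄, m ∈ 𝓜 → m' ∈ 𝓜 → ∀ φ : m ⟶ T.shift.obj m', φ = 0)
    (RC1 : ∀ ⦃m m' : C⦄, m ∈ 𝓜 → m' ∈ 𝓜 →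
      Function.Bijective (fun φ : m ⟶ m' => T.shift.map φ))
    (RC2 : ∀ ⦃M0 M1 X : C⦄, M0 ∈ 𝓜 → M1 ∈ 𝓜 →
      ∀ (f : M0 ⟶ M1) (g : M1 ⟶ X) (h : X ⟶ T.shift.obj M0), T.IsTri f g h →
      ∀ ⦃m : C⦄, m ∈ 𝓜 → ∀ t : m ⟶ X, ∃ s : m ⟶ M1, s ≫ g = t) :
    ∃ E : CategoryTheory.Quotient (starRel T 𝓜) ⥤ ModCat (Subcat 𝓜),
      E.IsEquivalence ∧
      Nonempty (Quotient.functor (starRel T 𝓜) ⋙ E ⋙ ObjectProperty.ι _ ≅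
        ObjectProperty.ι _ ⋙ resYoneda 𝓜) := by
  classical
  have hpred : ∀ P : Subcat (star T 𝓜),
      (fun F : (Subcat 𝓜)ᵒᵖ ⥤ AddCommGrpCat.{v} => F.Additive ∧ FinPres F)
        (((ObjectProperty.ι (fun X : C => X ∈ star T 𝓜)) ⋙ resYoneda 𝓜).obj P) :=
    fun P => ⟨resYoneda_obj_additive 𝓜 P.obj, finPres_of_star RC1 RC2 P.2⟩
  set F₀ : Subcat (star T 𝓜) ⥤ ModCat (Subcat 𝓜) :=
    ObjectProperty.lift _ (ObjectProperty.ι _ ⋙ resYoneda 𝓜) hpred with hF₀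
  -- pointwise version of F₀ maps
  have mapeq : ∀ (P Q : Subcat (star T 𝓜)) (t : P ⟶ Q) (m : (Subcat 𝓜)ᵒᵖ)
      (s : ((resYoneda 𝓜).obj P.obj).obj m),
      (F₀.map t).hom.app m s = mkEl 𝓜 (el 𝓜 s ≫ (show P.obj ⟶ Q.obj from t.hom)) := fun _ _ _ _ _ => rfl
  have hrel : ∀ (P Q : Subcat (star T 𝓜)) (t t' : P ⟶ Q), starRel T 𝓜 t t' →
      F₀.map t = F₀.map t' := by
    rintro P Q t t' ⟨Z, hZ, a, b, hab⟩
    obtain ⟨n, hn, rfl⟩ := hZ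
    apply InducedCategory.hom_ext
    show (resYoneda 𝓜).map (show P.obj ⟶ Q.obj from t.hom)
        = (resYoneda 𝓜).map (show P.obj ⟶ Q.obj from t'.hom)
    apply NatTrans.ext
    funext m
    apply AddCommGrpCat.ext
    intro s
    show mkEl 𝓜 (el 𝓜 s ≫ (show P.obj ⟶ Q.obj from t.hom))
        = mkEl 𝓜 (el 𝓜 s ≫ (show P.obj ⟶ Q.obj from t'.hom))
    have h2 : el 𝓜 s ≫ a = 0 := rigid m.unop.2 hn _
    have h3 : el 𝓜 s ≫ (show P.obj ⟶ Q.obj from (t - t').hom) = 0 := by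
      have h1 : el 𝓜 s ≫ (show P.obj ⟶ Q.obj from (t - t').hom) = el 𝓜 s ≫ a ≫ b := by
        rw [hab]
      rw [h1, ← Category.assoc, h2, Limits.zero_comp]
    have h4 : el 𝓜 s ≫ (show P.obj ⟶ Q.obj from t.hom)
        - el 𝓜 s ≫ (show P.obj ⟶ Q.obj from t'.hom) = 0 := by
      rw [← Preadditive.comp_sub]
      exact h3
    rw [sub_eq_zero.1 h4]
  refine ⟨CategoryTheory.Quotient.lift (starRel T 𝓜) F₀ hrel, ⟨?_, ?_, ?_⟩, ?_⟩
  · -- faithful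
    refine ⟨fun {P Q} η η' hE => ?_⟩
    induction η using Quot.inductionOn with | h t => ?_
    induction η' using Quot.inductionOn with | h t' => ?_
    have hE' : F₀.map t = F₀.map t' := hE
    refine CategoryTheory.Quotient.sound _ (faithful_aux P.as.2 (t - t').hom fun m s => ?_)
    have h1 : el 𝓜 (mkEl 𝓜 s) ≫ (show P.as.obj ⟶ Q.as.obj from t.hom)
        = el 𝓜 (mkEl 𝓜 s) ≫ (show P.as.obj ⟶ Q.as.obj from t'.hom) := by
      have := ConcreteCategory.congr_hom (congrArg (fun ν => NatTrans.app ν (op m)) (congrArg InducedCategory.Hom.hom hE'))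
        (mkEl (X := P.as.obj) 𝓜 s)
      exact congrArg (el 𝓜) this
    have h4 : s ≫ (show P.as.obj ⟶ Q.as.obj from (t - t').hom) = 0 := by
      rw [show (t - t').hom = t.hom - t'.hom from rfl, Preadditive.comp_sub]
      rw [show (s ≫ (show P.as.obj ⟶ Q.as.obj from t.hom) : m.obj ⟶ Q.as.obj)
        = s ≫ (show P.as.obj ⟶ Q.as.obj from t'.hom) from h1, sub_self]
    exact h4
  · -- full
    refine ⟨fun {P Q} η => ?_⟩
    obtain ⟨t, ht⟩ := full_aux RC2 P.as.2
      (show (resYoneda 𝓜).obj P.as.obj ⟶ (resYoneda 𝓜).obj Q.as.obj from η.hom)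
    exact ⟨(Quotient.functor (starRel T 𝓜)).map (ObjectProperty.homMk t), InducedCategory.hom_ext ht⟩
  · -- essentially surjective
    refine ⟨fun Fo => ?_⟩
    obtain ⟨X, hX, ⟨iso⟩⟩ := essSurj_aux RC1 RC2 Fo.2.2
    exact ⟨⟨⟨X, hX⟩⟩, ⟨ObjectProperty.isoMk _ (X := (CategoryTheory.Quotient.lift (starRel T 𝓜) F₀ hrel).obj ⟨⟨X, hX⟩⟩) (Y := Fo) iso.symm⟩⟩
  · -- the natural isomorphism
    refine ⟨eqToIso ?_⟩
    rw [← Functor.assoc, CategoryTheory.Quotient.lift_spec]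
    rfl
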